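/- Let n, m ∈ ℕ₀, G₁ ∈ 𝒢_n and G₂ ∈ 𝒢_m. Then the map (H₁, H₂) ↦ H₁ ⊙ H₂ is a bijection from the set {(H₁,H₂) ∈ 𝒢_n × 𝒢_m : E(H₁) ⊆ E(G₁) and E(H₂) ⊆ E(G₂)} onto the set {H ∈ 𝒢_{n+m+1} : E(H) ⊆ E(G₁ ⊙ G₂)}. In particular, in every connected graph H on {0,…,n+m+2} with E(H) ⊆ E(G₁ ⊙ G₂), the vertex n+1 is pivotal (every path from 0 to n+m+2 passes through it). -/

import Mathlib

open MeasureTheory Finset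
open scoped ENNReal Classical

noncomputable section

/-- The interior vertices `{1,…,n}` of the vertex set `{0,1,…,n+1}` (as `Fin (n+2)`). -/
def interiorVerts (n : ℕ) : Finset (Fin (n + 2)) :=
  Finset.univ.filter fun v => v ≠ 0 ∧ v ≠ Fin.last (n + 1)

/-- `ConnIn G a b S` : there is a path from `a` to `b` in `G` using only
vertices in `S ∪ {a, b}`. -/
def ConnIn {k : ℕ} (G : SimpleGraph (Fin k)) (a b : Fin k) (S : Set (Fin k)) : Prop :=
  ∃ w : G.Walk a b, ∀ v ∈ w.support, v = a ∨ v = b ∨ v ∈ S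

/-- `π_n(G) = Σ_{I ⊆ [n]} (-1)^{n-|I|} 1{0 ↔ n+1 in G|I}`. -/
def piFun (n : ℕ) (G : SimpleGraph (Fin (n + 2))) : ℤ :=
  ∑ I ∈ (interiorVerts n).powerset,
    (-1 : ℤ) ^ (n - I.card) *
      (if ConnIn G 0 (Fin.last (n + 1)) ↑I then 1 else 0)

/-- The number of edges of `G`, counted via ordered pairs `i < j`. -/
def edgeCount {k : ℕ} (G : SimpleGraph (Fin k)) : ℕ :=
  (Finset.univ.filter fun p : Fin k × Fin k => p.1 < p.2 ∧ G.Adj p.1 p.2).card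

/-- `κ_n(H) = Σ_{G ∈ 𝒢_n, E(G) ⊆ E(H)} (-1)^{|E(H)|-|E(G)|} π_n(G)`. -/
def kappaFun (n : ℕ) (H : SimpleGraph (Fin (n + 2))) : ℤ :=
  ∑ G ∈ Finset.univ.filter
      (fun G : SimpleGraph (Fin (n + 2)) => G.Connected ∧ G ≤ H),
    (-1 : ℤ) ^ (edgeCount H - edgeCount G) * piFun n G

/-- Embedding of the first factor's vertex set into that of the concatenation. -/
def emb1 (n m : ℕ) : Fin (n + 2) → Fin (n + m + 3) :=
  fun i => ⟨i.1, by have := i.isLt; omega⟩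

/-- Embedding of the second factor's vertex set into that of the concatenation:
the vertices `0,…,m+1` of `G₂` are relabelled as `n+1,…,n+m+2`. -/
def emb2 (n m : ℕ) : Fin (m + 2) → Fin (n + m + 3) :=
  fun j => ⟨n + 1 + j.1, by have := j.isLt; omega⟩

/-- The concatenation `G₁ ⊙ G₂`: the end-vertex `n+1` of `G₁` is identified with the
start-vertex of `G₂` and the edge sets are united. -/
def concatG {n m : ℕ} (G₁ : SimpleGraph (Fin (n + 2))) (G₂ : SimpleGraph (Fin (m + 2))) :
    SimpleGraph (Fin (n + m + 3)) :=
  SimpleGraph.fromRel fun u v =>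
    (∃ i j, G₁.Adj i j ∧ u = emb1 n m i ∧ v = emb1 n m j) ∨
    (∃ i j, G₂.Adj i j ∧ u = emb2 n m i ∧ v = emb2 n m j)


section AuxConcat

variable {n m : ℕ}

lemma emb1_inj : Function.Injective (emb1 n m) := fun a b h => by
  have h' := congrArg Fin.val h
  simp only [emb1] at h'
  exact Fin.ext h'

lemma emb2_inj : Function.Injective (emb2 n m) := fun a b h => by
  have h' : n + 1 + a.1 = n + 1 + b.1 := congrArg Fin.val h
  exact Fin.ext (by omega)

lemma emb1_eq_emb2 {i : Fin (n + 2)} {j : Fin (m + 2)} (h : emb1 n m i = emb2 n m j) :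
    i = Fin.last (n + 1) ∧ j = 0 := by
  have h' : i.1 = n + 1 + j.1 := congrArg Fin.val h
  have hi := i.isLt
  refine ⟨Fin.ext ?_, Fin.ext ?_⟩
  · simp only [Fin.val_last]; omega
  · simp only [Fin.val_zero]; omega

lemma concat_adj_side {G₁ : SimpleGraph (Fin (n + 2))} {G₂ : SimpleGraph (Fin (m + 2))}
    {u v : Fin (n + m + 3)} (h : (concatG G₁ G₂).Adj u v) :
    (u.1 ≤ n + 1 ∧ v.1 ≤ n + 1) ∨ (n + 1 ≤ u.1 ∧ n + 1 ≤ v.1) := by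
  rw [concatG, SimpleGraph.fromRel_adj] at h
  obtain ⟨-, h | h⟩ := h <;>
    rcases h with ⟨a, b, -, rfl, rfl⟩ | ⟨a, b, -, rfl, rfl⟩
  · exact Or.inl ⟨by have := a.isLt; simp only [emb1]; omega,
      by have := b.isLt; simp only [emb1]; omega⟩
  · exact Or.inr ⟨by simp only [emb2]; omega, by simp only [emb2]; omega⟩
  · exact Or.inl ⟨by have := b.isLt; simp only [emb1]; omega,
      by have := a.isLt; simp only [emb1]; omega⟩
  · exact Or.inr ⟨by simp only [emb2]; omega, by simp only [emb2]; omega⟩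

lemma concat_adj_emb1 {H₁ : SimpleGraph (Fin (n + 2))} {H₂ : SimpleGraph (Fin (m + 2))}
    {i j : Fin (n + 2)} :
    (concatG H₁ H₂).Adj (emb1 n m i) (emb1 n m j) ↔ H₁.Adj i j := by
  constructor
  · intro h
    rw [concatG, SimpleGraph.fromRel_adj] at h
    obtain ⟨hne, h | h⟩ := h <;>
      rcases h with ⟨a, b, hadj, ha, hb⟩ | ⟨a, b, hadj, ha, hb⟩
    · rw [emb1_inj ha, emb1_inj hb]; exact hadj
    · exact absurd (congrArg (emb1 n m)
        (((emb1_eq_emb2 ha).1).trans ((emb1_eq_emb2 hb).1).symm)) hne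
    · rw [emb1_inj ha, emb1_inj hb]; exact hadj.symm
    · exact absurd (congrArg (emb1 n m)
        (((emb1_eq_emb2 hb).1).trans ((emb1_eq_emb2 ha).1).symm)) hne
  · intro h
    rw [concatG, SimpleGraph.fromRel_adj]
    exact ⟨fun e => h.ne (emb1_inj e), Or.inl (Or.inl ⟨i, j, h, rfl, rfl⟩)⟩

lemma concat_adj_emb2 {H₁ : SimpleGraph (Fin (n + 2))} {H₂ : SimpleGraph (Fin (m + 2))}
    {i j : Fin (m + 2)} :
    (concatG H₁ H₂).Adj (emb2 n m i) (emb2 n m j) ↔ H₂.Adj i j := by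
  constructor
  · intro h
    rw [concatG, SimpleGraph.fromRel_adj] at h
    obtain ⟨hne, h | h⟩ := h <;>
      rcases h with ⟨a, b, hadj, ha, hb⟩ | ⟨a, b, hadj, ha, hb⟩
    · exact absurd (congrArg (emb2 n m)
        (((emb1_eq_emb2 ha.symm).2).trans ((emb1_eq_emb2 hb.symm).2).symm)) hne
    · rw [emb2_inj ha, emb2_inj hb]; exact hadj
    · exact absurd (congrArg (emb2 n m)
        (((emb1_eq_emb2 hb.symm).2).trans ((emb1_eq_emb2 ha.symm).2).symm)) hne
    · rw [emb2_inj ha, emb2_inj hb]; exact hadj.symm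
  · intro h
    rw [concatG, SimpleGraph.fromRel_adj]
    exact ⟨fun e => h.ne (emb2_inj e), Or.inl (Or.inr ⟨i, j, h, rfl, rfl⟩)⟩

/-- Projection of the concatenated vertex set onto the first factor. -/
def proj1 (n m : ℕ) (v : Fin (n + m + 3)) : Fin (n + 2) :=
  ⟨min v.1 (n + 1), by omega⟩

/-- Projection of the concatenated vertex set onto the second factor. -/
def proj2 (n m : ℕ) (v : Fin (n + m + 3)) : Fin (m + 2) :=
  ⟨v.1 - (n + 1), by have := v.isLt; omega⟩

lemma emb1_proj1 {v : Fin (n + m + 3)} (hv : v.1 ≤ n + 1) : emb1 n m (proj1 n m v) = v :=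
  Fin.ext (by simp only [emb1, proj1]; omega)

lemma emb2_proj2 {v : Fin (n + m + 3)} (hv : n + 1 ≤ v.1) : emb2 n m (proj2 n m v) = v :=
  Fin.ext (by simp only [emb2, proj2]; omega)

lemma proj1_emb1 (i : Fin (n + 2)) : proj1 n m (emb1 n m i) = i :=
  Fin.ext (by have := i.isLt; simp only [emb1, proj1]; omega)

lemma proj2_emb2 (i : Fin (m + 2)) : proj2 n m (emb2 n m i) = i :=
  Fin.ext (by simp only [emb2, proj2]; omega)

/-- The restriction of a graph on the concatenated vertex set to the first factor. -/
def restr1 (n m : ℕ) (H : SimpleGraph (Fin (n + m + 3))) : SimpleGraph (Fin (n + 2)) where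
  Adj i j := H.Adj (emb1 n m i) (emb1 n m j)
  symm := ⟨fun _ _ h => h.symm⟩
  loopless := ⟨fun _ h => H.loopless.irrefl _ h⟩

/-- The restriction of a graph on the concatenated vertex set to the second factor. -/
def restr2 (n m : ℕ) (H : SimpleGraph (Fin (n + m + 3))) : SimpleGraph (Fin (m + 2)) where
  Adj i j := H.Adj (emb2 n m i) (emb2 n m j)
  symm := ⟨fun _ _ h => h.symm⟩
  loopless := ⟨fun _ h => H.loopless.irrefl _ h⟩

lemma walk_proj1 {G₁ : SimpleGraph (Fin (n + 2))} {G₂ : SimpleGraph (Fin (m + 2))}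
    {H : SimpleGraph (Fin (n + m + 3))} (hle : H ≤ concatG G₁ G₂)
    {u v : Fin (n + m + 3)} (w : H.Walk u v) :
    (restr1 n m H).Reachable (proj1 n m u) (proj1 n m v) := by
  induction w with
  | nil => exact SimpleGraph.Reachable.refl _
  | @cons a x b h p ih =>
    rcases concat_adj_side (hle h) with ⟨hu, hx⟩ | ⟨hu, hx⟩
    · refine (SimpleGraph.Adj.reachable ?_).trans ih
      show H.Adj (emb1 n m (proj1 n m a)) (emb1 n m (proj1 n m x))
      rw [emb1_proj1 hu, emb1_proj1 hx]; exact h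
    · have e : proj1 n m a = proj1 n m x := Fin.ext (by simp only [proj1]; omega)
      rw [e]; exact ih

lemma walk_proj2 {G₁ : SimpleGraph (Fin (n + 2))} {G₂ : SimpleGraph (Fin (m + 2))}
    {H : SimpleGraph (Fin (n + m + 3))} (hle : H ≤ concatG G₁ G₂)
    {u v : Fin (n + m + 3)} (w : H.Walk u v) :
    (restr2 n m H).Reachable (proj2 n m u) (proj2 n m v) := by
  induction w with
  | nil => exact SimpleGraph.Reachable.refl _
  | @cons a x b h p ih =>
    rcases concat_adj_side (hle h) with ⟨hu, hx⟩ | ⟨hu, hx⟩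
    · have e : proj2 n m a = proj2 n m x := Fin.ext (by simp only [proj2]; omega)
      rw [e]; exact ih
    · refine (SimpleGraph.Adj.reachable ?_).trans ih
      show H.Adj (emb2 n m (proj2 n m a)) (emb2 n m (proj2 n m x))
      rw [emb2_proj2 hu, emb2_proj2 hx]; exact h

lemma pivotal_aux {G₁ : SimpleGraph (Fin (n + 2))} {G₂ : SimpleGraph (Fin (m + 2))}
    {H : SimpleGraph (Fin (n + m + 3))} (hle : H ≤ concatG G₁ G₂)
    {a b : Fin (n + m + 3)} (w : H.Walk a b) (ha : a.1 < n + 1) (hb : n + 1 < b.1) :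
    (⟨n + 1, by omega⟩ : Fin (n + m + 3)) ∈ w.support := by
  revert ha hb
  induction w with
  | nil => intro ha hb; omega
  | @cons a x b h p ih =>
    intro ha hb
    rw [SimpleGraph.Walk.support_cons, List.mem_cons]
    by_cases hx : x.1 = n + 1
    · right
      have e : x = (⟨n + 1, by omega⟩ : Fin (n + m + 3)) := Fin.ext hx
      rw [← e]; exact p.start_mem_support
    · rcases concat_adj_side (hle h) with ⟨hu, hxle⟩ | ⟨hu, -⟩
      · exact Or.inr (ih (by omega) hb)
      · omega

end AuxConcat

/-- The map `(H₁, H₂) ↦ H₁ ⊙ H₂` is a bijection from pairs of connected spanning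
subgraphs of `G₁` and `G₂` onto the connected spanning subgraphs of `G₁ ⊙ G₂`;
in particular the vertex `n+1` is pivotal in every connected `H ≤ G₁ ⊙ G₂`. -/
theorem concat_bijOn_and_pivotal (n m : ℕ)
    (G₁ : SimpleGraph (Fin (n + 2))) (G₂ : SimpleGraph (Fin (m + 2)))
    (hG₁ : G₁.Connected) (hG₂ : G₂.Connected) :
    Set.BijOn
      (fun p : SimpleGraph (Fin (n + 2)) × SimpleGraph (Fin (m + 2)) =>
        concatG p.1 p.2)
      {p | p.1.Connected ∧ p.2.Connected ∧ p.1 ≤ G₁ ∧ p.2 ≤ G₂}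
      {H : SimpleGraph (Fin (n + m + 3)) | H.Connected ∧ H ≤ concatG G₁ G₂} ∧
    ∀ H : SimpleGraph (Fin (n + m + 3)), H.Connected → H ≤ concatG G₁ G₂ →
      ∀ w : H.Walk 0 (Fin.last (n + m + 2)),
        (⟨n + 1, by omega⟩ : Fin (n + m + 3)) ∈ w.support := by
  constructor
  · refine ⟨?_, ?_, ?_⟩
    · -- MapsTo
      rintro ⟨H₁, H₂⟩ ⟨h₁, h₂, hle₁, hle₂⟩
      simp only [Set.mem_setOf_eq] at h₁ h₂ hle₁ hle₂
      show (concatG H₁ H₂).Connected ∧ concatG H₁ H₂ ≤ concatG G₁ G₂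
      refine ⟨?_, ?_⟩
      · -- connectedness of the concatenation
        rw [SimpleGraph.connected_iff]
        refine ⟨?_, ⟨0⟩⟩
        let hom1 : H₁ →g concatG H₁ H₂ :=
          ⟨emb1 n m, fun h => concat_adj_emb1.mpr h⟩
        let hom2 : H₂ →g concatG H₁ H₂ :=
          ⟨emb2 n m, fun h => concat_adj_emb2.mpr h⟩
        have reach_c : ∀ v : Fin (n + m + 3),
            (concatG H₁ H₂).Reachable v ⟨n + 1, by omega⟩ := by
          intro v
          by_cases hv : v.1 ≤ n + 1
          · have h' : (concatG H₁ H₂).Reachable (emb1 n m (proj1 n m v))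
                (emb1 n m (Fin.last (n + 1))) :=
              (h₁.preconnected (proj1 n m v) (Fin.last (n + 1))).map hom1
            have e1 : emb1 n m (proj1 n m v) = v := emb1_proj1 hv
            have e2 : emb1 n m (Fin.last (n + 1)) = ⟨n + 1, by omega⟩ := Fin.ext rfl
            rwa [e1, e2] at h'
          · have h' : (concatG H₁ H₂).Reachable (emb2 n m (proj2 n m v))
                (emb2 n m (0 : Fin (m + 2))) :=
              (h₂.preconnected (proj2 n m v) 0).map hom2
            have e1 : emb2 n m (proj2 n m v) = v := emb2_proj2 (by omega)
            have e2 : emb2 n m (0 : Fin (m + 2)) = ⟨n + 1, by omega⟩ :=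
              Fin.ext (by simp [emb2])
            rwa [e1, e2] at h'
        exact fun u v => (reach_c u).trans (reach_c v).symm
      · -- monotonicity
        intro u v h
        simp only [concatG, SimpleGraph.fromRel_adj] at h ⊢
        refine ⟨h.1, ?_⟩
        rcases h.2 with h | h <;>
          [left; right] <;>
          rcases h with ⟨a, b, hadj, ha, hb⟩ | ⟨a, b, hadj, ha, hb⟩
        · exact Or.inl ⟨a, b, hle₁ hadj, ha, hb⟩
        · exact Or.inr ⟨a, b, hle₂ hadj, ha, hb⟩
        · exact Or.inl ⟨a, b, hle₁ hadj, ha, hb⟩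
        · exact Or.inr ⟨a, b, hle₂ hadj, ha, hb⟩
    · -- InjOn
      rintro ⟨H₁, H₂⟩ - ⟨H₁', H₂'⟩ - h
      simp only at h
      have e1 : H₁ = H₁' := by
        ext i j
        rw [← concat_adj_emb1 (H₂ := H₂), h, concat_adj_emb1]
      have e2 : H₂ = H₂' := by
        ext i j
        rw [← concat_adj_emb2 (H₁ := H₁), h, concat_adj_emb2]
      rw [Prod.mk.injEq]
      exact ⟨e1, e2⟩
    · -- SurjOn
      rintro H ⟨hconn, hle⟩
      refine ⟨(restr1 n m H, restr2 n m H), ⟨?_, ?_, ?_, ?_⟩, ?_⟩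
      · -- restr1 connected
        rw [SimpleGraph.connected_iff]
        refine ⟨fun a b => ?_, ⟨0⟩⟩
        obtain ⟨w⟩ := hconn.preconnected (emb1 n m a) (emb1 n m b)
        have := walk_proj1 hle w
        rwa [proj1_emb1, proj1_emb1] at this
      · -- restr2 connected
        rw [SimpleGraph.connected_iff]
        refine ⟨fun a b => ?_, ⟨0⟩⟩
        obtain ⟨w⟩ := hconn.preconnected (emb2 n m a) (emb2 n m b)
        have := walk_proj2 hle w
        rwa [proj2_emb2, proj2_emb2] at this
      · -- restr1 ≤ G₁
        intro i j h
        exact concat_adj_emb1.mp (hle h)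
      · -- restr2 ≤ G₂
        intro i j h
        exact concat_adj_emb2.mp (hle h)
      · -- concat of restrictions is H
        show concatG (restr1 n m H) (restr2 n m H) = H
        ext u v
        constructor
        · intro h
          simp only [concatG, SimpleGraph.fromRel_adj] at h
          obtain ⟨hne, h | h⟩ := h <;>
            rcases h with ⟨a, b, hadj, rfl, rfl⟩ | ⟨a, b, hadj, rfl, rfl⟩
          · exact hadj
          · exact hadj
          · exact hadj.symm
          · exact hadj.symm
        · intro h
          simp only [concatG, SimpleGraph.fromRel_adj]
          refine ⟨h.ne, Or.inl ?_⟩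
          rcases concat_adj_side (hle h) with ⟨hu, hv⟩ | ⟨hu, hv⟩
          · refine Or.inl ⟨proj1 n m u, proj1 n m v, ?_, (emb1_proj1 hu).symm,
              (emb1_proj1 hv).symm⟩
            show H.Adj (emb1 n m (proj1 n m u)) (emb1 n m (proj1 n m v))
            rwa [emb1_proj1 hu, emb1_proj1 hv]
          · refine Or.inr ⟨proj2 n m u, proj2 n m v, ?_, (emb2_proj2 hu).symm,
              (emb2_proj2 hv).symm⟩
            show H.Adj (emb2 n m (proj2 n m u)) (emb2 n m (proj2 n m v))
            rwa [emb2_proj2 hu, emb2_proj2 hv]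
  · -- pivotality
    intro H _ hle w
    exact pivotal_aux hle w (by simp) (by simp [Fin.last])

end
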